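/- For i = 1, 2, the unique additive map δ̃_i : A → A determined on the left R-module basis by δ̃_i(r·x_1^{a}x_2^{b}) = δ_i(r)·x_1^{a}x_2^{b} for all r ∈ R and a, b ∈ ℕ is a σ̃_i-derivation of A, i.e., δ̃_i(fg) = σ̃_i(f)·δ̃_i(g) + δ̃_i(f)·g for all f, g ∈ A, where σ̃_i : A → A is the ring automorphism determined by σ̃_i(r·x_1^{a}x_2^{b}) = σ_i(r)·x_1^{a}x_2^{b}. -/

import Mathlib

/-- **Statement 6.** Let `A` be a skew PBW extension of `R` in two variables of
automorphism type: `A` contains `R` as a subring (via the injective ring homomorphism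
`ι` sharing the identity), `A` is free as a left `R`-module with basis the ordered
monomials `{x₁^a x₂^b : (a,b) ∈ ℕ²}`, for `i = 1, 2` there are ring automorphisms
`σᵢ` of `R` and `σᵢ`-derivations `δᵢ` with `xᵢ·r = σᵢ(r)·xᵢ + δᵢ(r)`, and there are
a nonzero `d ∈ R` and `r₀, r₁, r₂ ∈ R` with `x₂x₁ − d·x₁x₂ = r₀ + r₁x₁ + r₂x₂`;
assume all the compatibility conditions listed in the hypotheses (the `σ`'s and `δ`'s
commute with each other, and the `δ`'s kill, and the `σ`'s fix, the structure
constants `d, r₀, r₁, r₂`).  Then for `i = 1, 2`, the unique additive map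
`δ̃ᵢ : A → A` determined on the basis by `δ̃ᵢ(r·x₁^a x₂^b) = δᵢ(r)·x₁^a x₂^b`
is a `σ̃ᵢ`-derivation of `A`, i.e. `δ̃ᵢ(fg) = σ̃ᵢ(f)·δ̃ᵢ(g) + δ̃ᵢ(f)·g`, where `σ̃ᵢ`
is the ring automorphism of `A` determined by `σ̃ᵢ(r·x₁^a x₂^b) = σᵢ(r)·x₁^a x₂^b`. -/
theorem skew_pbw_two_vars_extended_delta_is_sigma_derivation
    {R A : Type*} [Ring R] [Ring A] (ι : R →+* A) (hι : Function.Injective ι)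
    (x₁ x₂ : A) (σ : Fin 2 → R ≃+* R) (δ : Fin 2 → R → R)
    (hδadd : ∀ (i : Fin 2) (r s : R), δ i (r + s) = δ i r + δ i s)
    (hδmul : ∀ (i : Fin 2) (r s : R), δ i (r * s) = σ i r * δ i s + δ i r * s)
    (hcomm₁ : ∀ r : R, x₁ * ι r = ι (σ 0 r) * x₁ + ι (δ 0 r))
    (hcomm₂ : ∀ r : R, x₂ * ι r = ι (σ 1 r) * x₂ + ι (δ 1 r))
    (d r₀ r₁ r₂ : R) (hd : d ≠ 0)
    (hrel : x₂ * x₁ - ι d * (x₁ * x₂) = ι r₀ + ι r₁ * x₁ + ι r₂ * x₂)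
    (hσδ : ∀ (i : Fin 2) (r : R), σ i (δ i r) = δ i (σ i r))
    (hδδ : ∀ (i j : Fin 2) (r : R), δ i (δ j r) = δ j (δ i r))
    (hδσ : ∀ (i j : Fin 2) (r : R), δ i (σ j r) = σ j (δ i r))
    (hσσ : ∀ (i j : Fin 2) (r : R), σ i (σ j r) = σ j (σ i r))
    (hδd : ∀ k : Fin 2, δ k d = 0)
    (hδr₀ : ∀ k : Fin 2, δ k r₀ = 0) (hδr₁ : ∀ k : Fin 2, δ k r₁ = 0)
    (hδr₂ : ∀ k : Fin 2, δ k r₂ = 0)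
    (hσd : ∀ k : Fin 2, σ k d = d)
    (hσr₀ : ∀ k : Fin 2, σ k r₀ = r₀) (hσr₁ : ∀ k : Fin 2, σ k r₁ = r₁)
    (hσr₂ : ∀ k : Fin 2, σ k r₂ = r₂)
    (hbasis : Function.Bijective fun f : ℕ × ℕ →₀ R =>
      f.sum fun ab c => ι c * (x₁ ^ ab.1 * x₂ ^ ab.2)) :
    ∀ i : Fin 2, ∃ (σt : A ≃+* A) (δt : A →+ A),
      (∀ (r : R) (a b : ℕ),
        σt (ι r * (x₁ ^ a * x₂ ^ b)) = ι (σ i r) * (x₁ ^ a * x₂ ^ b)) ∧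
      (∀ (r : R) (a b : ℕ),
        δt (ι r * (x₁ ^ a * x₂ ^ b)) = ι (δ i r) * (x₁ ^ a * x₂ ^ b)) ∧
      (∀ f g : A, δt (f * g) = σt f * δt g + δt f * g) := by
  intro i
  classical
  -- basic facts about δ
  have hδ0 : ∀ j : Fin 2, δ j 0 = 0 := by
    intro j
    have h := hδadd j 0 0
    rw [add_zero] at h
    exact add_eq_left.mp h.symm
  have hδ1 : ∀ j : Fin 2, δ j 1 = 0 := by
    intro j
    have h := hδmul j 1 1
    rw [mul_one, map_one, one_mul, mul_one] at h
    exact add_eq_left.mp h.symm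
  set Φ : (ℕ × ℕ →₀ R) → A := fun f => f.sum fun ab c => ι c * (x₁ ^ ab.1 * x₂ ^ ab.2) with hΦ
  have hΦsingle : ∀ (ab : ℕ × ℕ) (r : R),
      Φ (Finsupp.single ab r) = ι r * (x₁ ^ ab.1 * x₂ ^ ab.2) := by
    intro ab r
    simp only [hΦ]
    exact Finsupp.sum_single_index (by simp)
  have hΦadd : ∀ f g, Φ (f + g) = Φ f + Φ g := by
    intro f g
    simp only [hΦ]
    exact Finsupp.sum_add_index' (by intro ab; simp) (by intro ab c₁ c₂; rw [map_add, add_mul])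
  have hΦ0 : Φ 0 = 0 := by simp [hΦ]
  set E : (ℕ × ℕ →₀ R) ≃ A := Equiv.ofBijective Φ hbasis with hEdef
  have hE : ∀ f, E f = Φ f := fun f => rfl
  have hEsymmΦ : ∀ f, E.symm (Φ f) = f := fun f => E.symm_apply_apply f
  have hEs : ∀ (r : R) (a b : ℕ),
      E.symm (ι r * (x₁ ^ a * x₂ ^ b)) = Finsupp.single (a, b) r := by
    intro r a b
    rw [Equiv.symm_apply_eq, hE, hΦsingle]
  have hEsadd : ∀ u v : A, E.symm (u + v) = E.symm u + E.symm v := by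
    intro u v
    apply E.injective
    rw [E.apply_symm_apply, hE, hΦadd, ← hE, ← hE, E.apply_symm_apply, E.apply_symm_apply]
  have hEs0 : E.symm 0 = 0 := by rw [Equiv.symm_apply_eq, hE, hΦ0]
  set D : A → A := fun w => Φ (Finsupp.mapRange (δ i) (hδ0 i) (E.symm w)) with hDdef
  set S : A → A := fun w => Φ (Finsupp.mapRange (σ i) (map_zero _) (E.symm w)) with hSdef
  have hDadd : ∀ u v, D (u + v) = D u + D v := by
    intro u v
    simp only [hDdef]
    rw [hEsadd, Finsupp.mapRange_add (hδadd i), hΦadd]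
  have hSadd : ∀ u v, S (u + v) = S u + S v := by
    intro u v
    simp only [hSdef]
    rw [hEsadd, Finsupp.mapRange_add (map_add _), hΦadd]
  have hD0 : D 0 = 0 := by simp [hDdef, hEs0, hΦ0]
  have hS0 : S 0 = 0 := by simp [hSdef, hEs0, hΦ0]
  have hDb : ∀ (r : R) (a b : ℕ),
      D (ι r * (x₁ ^ a * x₂ ^ b)) = ι (δ i r) * (x₁ ^ a * x₂ ^ b) := by
    intro r a b
    simp only [hDdef]
    rw [hEs, Finsupp.mapRange_single, hΦsingle]
  have hSb : ∀ (r : R) (a b : ℕ),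
      S (ι r * (x₁ ^ a * x₂ ^ b)) = ι (σ i r) * (x₁ ^ a * x₂ ^ b) := by
    intro r a b
    simp only [hSdef]
    rw [hEs, Finsupp.mapRange_single, hΦsingle]
  -- the extension principle
  have hull : ∀ F G : A → A, (∀ u v, F (u + v) = F u + F v) → (∀ u v, G (u + v) = G u + G v) →
      F 0 = 0 → G 0 = 0 →
      (∀ (r : R) (a b : ℕ), F (ι r * (x₁ ^ a * x₂ ^ b)) = G (ι r * (x₁ ^ a * x₂ ^ b))) →
      ∀ w, F w = G w := by
    intro F G hF hG hF0 hG0 hbase w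
    obtain ⟨f, rfl⟩ := hbasis.2 w
    show F (Φ f) = G (Φ f)
    induction f using Finsupp.induction_linear with
    | zero => rw [hΦ0, hF0, hG0]
    | add f g hf hg => rw [hΦadd, hF, hG, hf, hg]
    | single ab r => rw [hΦsingle]; exact hbase r ab.1 ab.2
  -- monomial manipulations
  have hx₁m : ∀ a b : ℕ, x₁ * (x₁ ^ a * x₂ ^ b) = x₁ ^ (a + 1) * x₂ ^ b := by
    intro a b
    rw [← mul_assoc, ← pow_succ']
  have hx₂m0 : ∀ b : ℕ, x₂ * (x₁ ^ 0 * x₂ ^ b) = x₁ ^ 0 * x₂ ^ (b + 1) := by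
    intro b
    rw [pow_zero, one_mul, one_mul, ← pow_succ']
  have hDmono : ∀ a b : ℕ, D (x₁ ^ a * x₂ ^ b) = 0 := by
    intro a b
    simpa [hδ1 i] using hDb 1 a b
  have hSmono : ∀ a b : ℕ, S (x₁ ^ a * x₂ ^ b) = x₁ ^ a * x₂ ^ b := by
    intro a b
    simpa using hSb 1 a b
  -- commutation with scalars
  have hDι : ∀ (r : R) (w : A), D (ι r * w) = ι (σ i r) * D w + ι (δ i r) * w := by
    intro r
    apply hull (fun w => D (ι r * w)) (fun w => ι (σ i r) * D w + ι (δ i r) * w)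
    · intro u v; rw [mul_add, hDadd]
    · intro u v
      rw [hDadd, mul_add, mul_add]
      abel
    · rw [mul_zero, hD0]
    · rw [hD0, mul_zero, mul_zero, add_zero]
    · intro s a b
      rw [← mul_assoc, ← map_mul, hDb, hDb, hδmul, map_add, add_mul, map_mul, map_mul,
        mul_assoc, mul_assoc]
  have hSι : ∀ (r : R) (w : A), S (ι r * w) = ι (σ i r) * S w := by
    intro r
    apply hull (fun w => S (ι r * w)) (fun w => ι (σ i r) * S w)
    · intro u v; rw [mul_add, hSadd]
    · intro u v; rw [hSadd, mul_add]
    · rw [mul_zero, hS0]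
    · rw [hS0, mul_zero]
    · intro s a b
      rw [← mul_assoc, ← map_mul, hSb, hSb, map_mul, map_mul, mul_assoc]
  -- commutation with x₁ on the left
  have key₁ : ∀ (s : R) (a b : ℕ), x₁ * (ι s * (x₁ ^ a * x₂ ^ b)) =
      ι (σ 0 s) * (x₁ ^ (a + 1) * x₂ ^ b) + ι (δ 0 s) * (x₁ ^ a * x₂ ^ b) := by
    intro s a b
    rw [← mul_assoc, hcomm₁, add_mul, mul_assoc, hx₁m]
  have hDx₁ : ∀ w, D (x₁ * w) = x₁ * D w := by
    apply hull (fun w => D (x₁ * w)) (fun w => x₁ * D w)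
    · intro u v; rw [mul_add, hDadd]
    · intro u v; rw [hDadd, mul_add]
    · rw [mul_zero, hD0]
    · rw [hD0, mul_zero]
    · intro s a b
      rw [key₁, hDadd, hDb, hDb, hDb, key₁, hδσ, hδδ]
  have hSx₁ : ∀ w, S (x₁ * w) = x₁ * S w := by
    apply hull (fun w => S (x₁ * w)) (fun w => x₁ * S w)
    · intro u v; rw [mul_add, hSadd]
    · intro u v; rw [hSadd, mul_add]
    · rw [mul_zero, hS0]
    · rw [hS0, mul_zero]
    · intro s a b
      rw [key₁, hSadd, hSb, hSb, hSb, key₁, hσσ, hδσ]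
  -- the relation, rearranged
  have hx₂x₁ : x₂ * x₁ = (ι r₀ + ι r₁ * x₁ + ι r₂ * x₂) + ι d * (x₁ * x₂) :=
    sub_eq_iff_eq_add.mp hrel
  -- key induction on monomials
  have hkey : ∀ c e : ℕ, D (x₂ * (x₁ ^ c * x₂ ^ e)) = 0 ∧
      S (x₂ * (x₁ ^ c * x₂ ^ e)) = x₂ * (x₁ ^ c * x₂ ^ e) := by
    intro c
    induction c with
    | zero =>
      intro e
      rw [hx₂m0]
      exact ⟨hDmono 0 (e + 1), hSmono 0 (e + 1)⟩
    | succ c ih =>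
      intro e
      have hsplit : x₂ * (x₁ ^ (c + 1) * x₂ ^ e) =
          (ι r₀ * (x₁ ^ c * x₂ ^ e) + ι r₁ * (x₁ ^ (c + 1) * x₂ ^ e)
            + ι r₂ * (x₂ * (x₁ ^ c * x₂ ^ e)))
            + ι d * (x₁ * (x₂ * (x₁ ^ c * x₂ ^ e))) := by
        have : x₂ * (x₁ ^ (c + 1) * x₂ ^ e) = (x₂ * x₁) * (x₁ ^ c * x₂ ^ e) := by
          rw [pow_succ', mul_assoc, ← mul_assoc x₂ x₁]
        rw [this, hx₂x₁, add_mul, add_mul, add_mul, mul_assoc, mul_assoc, mul_assoc,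
          mul_assoc, hx₁m]
      constructor
      · rw [hsplit, hDadd, hDadd, hDadd, hDι, hDι, hDι, hDι, hDx₁, (ih e).1, hDmono, hDmono,
          hδd, hδr₀, hδr₁, hδr₂]
        simp
      · rw [hsplit, hSadd, hSadd, hSadd, hSι, hSι, hSι, hSι, hSx₁, (ih e).2, hSmono, hSmono,
          hσd, hσr₀, hσr₁, hσr₂, ← hsplit]
  have hDx₂m : ∀ c e : ℕ, D (x₂ * (x₁ ^ c * x₂ ^ e)) = 0 := fun c e => (hkey c e).1
  have hSx₂m : ∀ c e : ℕ, S (x₂ * (x₁ ^ c * x₂ ^ e)) = x₂ * (x₁ ^ c * x₂ ^ e) :=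
    fun c e => (hkey c e).2
  -- commutation with x₂ on the left
  have key₂ : ∀ (s : R) (a b : ℕ), x₂ * (ι s * (x₁ ^ a * x₂ ^ b)) =
      ι (σ 1 s) * (x₂ * (x₁ ^ a * x₂ ^ b)) + ι (δ 1 s) * (x₁ ^ a * x₂ ^ b) := by
    intro s a b
    rw [← mul_assoc, hcomm₂, add_mul, mul_assoc]
  have hDx₂ : ∀ w, D (x₂ * w) = x₂ * D w := by
    apply hull (fun w => D (x₂ * w)) (fun w => x₂ * D w)
    · intro u v; rw [mul_add, hDadd]
    · intro u v; rw [hDadd, mul_add]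
    · rw [mul_zero, hD0]
    · rw [hD0, mul_zero]
    · intro s a b
      rw [key₂, hDadd, hDι, hDb, hDb, key₂, hDx₂m, hδσ, hδδ]
      simp
  have hSx₂ : ∀ w, S (x₂ * w) = x₂ * S w := by
    apply hull (fun w => S (x₂ * w)) (fun w => x₂ * S w)
    · intro u v; rw [mul_add, hSadd]
    · intro u v; rw [hSadd, mul_add]
    · rw [mul_zero, hS0]
    · rw [hS0, mul_zero]
    · intro s a b
      rw [key₂, hSadd, hSι, hSb, hSb, key₂, hSx₂m, hσσ, hδσ 1 i]
  -- commutation with monomials on the left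
  have hDx₁p : ∀ (a : ℕ) (w : A), D (x₁ ^ a * w) = x₁ ^ a * D w := by
    intro a
    induction a with
    | zero => intro w; rw [pow_zero, one_mul, one_mul]
    | succ a ih =>
      intro w
      rw [pow_succ', mul_assoc, hDx₁, ih, mul_assoc]
  have hSx₁p : ∀ (a : ℕ) (w : A), S (x₁ ^ a * w) = x₁ ^ a * S w := by
    intro a
    induction a with
    | zero => intro w; rw [pow_zero, one_mul, one_mul]
    | succ a ih =>
      intro w
      rw [pow_succ', mul_assoc, hSx₁, ih, mul_assoc]
  have hDx₂p : ∀ (b : ℕ) (w : A), D (x₂ ^ b * w) = x₂ ^ b * D w := by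
    intro b
    induction b with
    | zero => intro w; rw [pow_zero, one_mul, one_mul]
    | succ b ih =>
      intro w
      rw [pow_succ', mul_assoc, hDx₂, ih, mul_assoc]
  have hSx₂p : ∀ (b : ℕ) (w : A), S (x₂ ^ b * w) = x₂ ^ b * S w := by
    intro b
    induction b with
    | zero => intro w; rw [pow_zero, one_mul, one_mul]
    | succ b ih =>
      intro w
      rw [pow_succ', mul_assoc, hSx₂, ih, mul_assoc]
  have hDmm : ∀ (a b : ℕ) (w : A), D ((x₁ ^ a * x₂ ^ b) * w) = (x₁ ^ a * x₂ ^ b) * D w := by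
    intro a b w
    rw [mul_assoc, hDx₁p, hDx₂p, mul_assoc]
  have hSmm : ∀ (a b : ℕ) (w : A), S ((x₁ ^ a * x₂ ^ b) * w) = (x₁ ^ a * x₂ ^ b) * S w := by
    intro a b w
    rw [mul_assoc, hSx₁p, hSx₂p, mul_assoc]
  -- the derivation identity
  have hder : ∀ f g : A, D (f * g) = S f * D g + D f * g := by
    intro f g
    refine hull (fun f => D (f * g)) (fun f => S f * D g + D f * g) ?_ ?_ ?_ ?_ ?_ f
    · intro u v; beta_reduce; rw [add_mul, hDadd]
    · intro u v
      beta_reduce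
      rw [hDadd, hSadd, add_mul, add_mul]
      abel
    · beta_reduce; rw [zero_mul, hD0]
    · beta_reduce; rw [hD0, hS0, zero_mul, zero_mul, add_zero]
    · intro r a b
      beta_reduce
      rw [mul_assoc, hDι, hDmm, hSb, hDb]
      simp only [mul_assoc]
  -- S is multiplicative
  have hSmul : ∀ f g : A, S (f * g) = S f * S g := by
    intro f g
    refine hull (fun f => S (f * g)) (fun f => S f * S g) ?_ ?_ ?_ ?_ ?_ f
    · intro u v; beta_reduce; rw [add_mul, hSadd]
    · intro u v; beta_reduce; rw [hSadd, add_mul]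
    · beta_reduce; rw [zero_mul, hS0]
    · beta_reduce; rw [hS0, zero_mul]
    · intro r a b
      beta_reduce
      rw [mul_assoc, hSι, hSmm, hSb]
      simp only [mul_assoc]
  -- S is bijective with explicit inverse T
  set T : A → A := fun w => Φ (Finsupp.mapRange (σ i).symm (map_zero _) (E.symm w)) with hTdef
  have hTS : ∀ w, T (S w) = w := by
    intro w
    simp only [hTdef, hSdef]
    rw [hEsymmΦ]
    have : Finsupp.mapRange (σ i).symm (map_zero _)
        (Finsupp.mapRange (σ i) (map_zero _) (E.symm w)) = E.symm w := by
      ext ab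
      simp [Finsupp.mapRange_apply]
    rw [this, ← hE, E.apply_symm_apply]
  have hST : ∀ w, S (T w) = w := by
    intro w
    simp only [hTdef, hSdef]
    rw [hEsymmΦ]
    have : Finsupp.mapRange (σ i) (map_zero _)
        (Finsupp.mapRange (σ i).symm (map_zero _) (E.symm w)) = E.symm w := by
      ext ab
      simp [Finsupp.mapRange_apply]
    rw [this, ← hE, E.apply_symm_apply]
  refine ⟨⟨⟨S, T, hTS, hST⟩, hSmul, hSadd⟩, AddMonoidHom.mk' D hDadd, ?_, ?_, ?_⟩
  · exact hSb
  · exact hDb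
  · exact hder
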